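/- In a diagnosis setting that is a weak model of failure, a component C ∈ 𝔠 is an actual cause if and only if C belongs to some minimal diagnosis. -/
import Mathlib


/-- A propositional formula, identified with the set of valuations satisfying it. -/
abbrev PropFormula (V : Type*) := (V → Bool) → Prop

/-- A set of formulas is consistent if some valuation satisfies all of them. -/
def Consistent {V : Type*} (T : Set (PropFormula V)) : Prop :=
  ∃ v : V → Bool, ∀ φ ∈ T, φ v

/-- A consistency-based diagnosis setting: a finite set of components, injective
abnormality variables, a model `M`, and an observation `Obs`. -/
structure DiagSetting (V α : Type*) where
  comps : Finset α
  ab : α → V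
  ab_inj : Function.Injective ab
  M : Set (PropFormula V)
  Obs : Set (PropFormula V)

variable {V α : Type*} [DecidableEq α]

/-- `Th(Δ) = M ∪ Obs ∪ { ab C is true : C ∈ Δ } ∪ { ab C is false : C ∈ 𝔠 \ Δ }`. -/
def DiagSetting.Th (S : DiagSetting V α) (Δ : Finset α) : Set (PropFormula V) :=
  S.M ∪ S.Obs ∪ {φ | ∃ C ∈ Δ, φ = fun v => v (S.ab C) = true}
    ∪ {φ | ∃ C ∈ S.comps \ Δ, φ = fun v => v (S.ab C) = false}

/-- `Δ` is a diagnosis if `Δ ⊆ 𝔠` and `Th(Δ)` is consistent. -/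
def DiagSetting.Diagnosis (S : DiagSetting V α) (Δ : Finset α) : Prop :=
  Δ ⊆ S.comps ∧ Consistent (S.Th Δ)

/-- A diagnosis is minimal if no proper subset of it is a diagnosis. -/
def DiagSetting.MinimalDiagnosis (S : DiagSetting V α) (Δ : Finset α) : Prop :=
  S.Diagnosis Δ ∧ ∀ Δ' ⊂ Δ, ¬ S.Diagnosis Δ'

/-- `C` is a counterfactual cause if `Th({C})` is consistent. -/
def DiagSetting.CounterfactualCause (S : DiagSetting V α) (C : α) : Prop :=
  C ∈ S.comps ∧ Consistent (S.Th {C})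

/-- `Γ ⊆ 𝔠 \ {C}` is a contingency set for `C ∈ 𝔠` if `Th(Γ)` is inconsistent
and `Th(Γ ∪ {C})` is consistent. -/
def DiagSetting.ContingencySet (S : DiagSetting V α) (C : α) (Γ : Finset α) : Prop :=
  C ∈ S.comps ∧ Γ ⊆ S.comps.erase C ∧ ¬ Consistent (S.Th Γ) ∧ Consistent (S.Th (insert C Γ))

/-- `C` is an actual cause if it has a contingency set. -/
def DiagSetting.ActualCause (S : DiagSetting V α) (C : α) : Prop :=
  ∃ Γ : Finset α, S.ContingencySet C Γ

/-- A contingency set for `C` is minimal if no proper subset is a contingency set for `C`. -/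
def DiagSetting.MinimalContingencySet (S : DiagSetting V α) (C : α) (Γ : Finset α) : Prop :=
  S.ContingencySet C Γ ∧ ∀ Γ' ⊂ Γ, ¬ S.ContingencySet C Γ'

/-- The truth value of `φ` does not depend on any abnormality variable `ab C'`, `C' ∈ 𝔠`. -/
def DiagSetting.IndepAb (S : DiagSetting V α) (φ : PropFormula V) : Prop :=
  ∀ v v' : V → Bool, (∀ x : V, (∀ C ∈ S.comps, S.ab C ≠ x) → v x = v' x) → (φ v ↔ φ v')

/-- A weak model of failure: every formula of `M` is semantically of the form
`(ab C is true) ∨ ψ` with `ψ` independent of the abnormality variables, and every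
formula of `Obs` is independent of the abnormality variables. -/
def DiagSetting.WeakModel (S : DiagSetting V α) : Prop :=
  (∀ φ ∈ S.M, ∃ C ∈ S.comps, ∃ ψ : PropFormula V,
      S.IndepAb ψ ∧ ∀ v, φ v ↔ (v (S.ab C) = true ∨ ψ v)) ∧
  (∀ φ ∈ S.Obs, S.IndepAb φ)

open Classical in
/-- Responsibility: `1/(1+|Γ|)` for a minimum-cardinality contingency set `Γ` for `C`
if `C` is an actual cause, and `0` otherwise. -/
noncomputable def DiagSetting.Resp (S : DiagSetting V α) (C : α) : ℚ :=
  if S.ActualCause C then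
    1 / (1 + ((sInf {n : ℕ | ∃ Γ : Finset α, S.ContingencySet C Γ ∧ Γ.card = n} : ℕ) : ℚ))
  else 0

/-- Monotonicity of consistency of `Th` in a weak model of failure. -/
theorem th_mono (S : DiagSetting V α) (hW : S.WeakModel) {Δ Δ' : Finset α}
    (h1 : Δ ⊆ Δ') (h2 : Δ' ⊆ S.comps) (hc : Consistent (S.Th Δ)) :
    Consistent (S.Th Δ') := by
  classical
  obtain ⟨v, hv⟩ := hc
  set v' : V → Bool := fun x => if ∃ C' ∈ Δ', S.ab C' = x then true else v x with hv'def
  have hsame : ∀ x : V, (∀ C ∈ S.comps, S.ab C ≠ x) → v x = v' x := by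
    intro x hx
    simp only [hv'def]
    rw [if_neg]
    rintro ⟨C', hC', rfl⟩
    exact hx C' (h2 hC') rfl
  refine ⟨v', ?_⟩
  intro φ hφ
  rcases hφ with ((hφ | hφ) | hφ) | hφ
  · obtain ⟨c, hcc, ψ, hind, hiff⟩ := hW.1 φ hφ
    have h0 : φ v := hv φ (Or.inl (Or.inl (Or.inl hφ)))
    rw [hiff] at h0 ⊢
    rcases h0 with h0 | h0
    · left
      simp only [hv'def]
      split
      · rfl
      · exact h0
    · exact Or.inr ((hind v v' hsame).1 h0)
  · exact (hW.2 φ hφ v v' hsame).1 (hv φ (Or.inl (Or.inl (Or.inr hφ))))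
  · obtain ⟨c, hc, rfl⟩ := hφ
    simp only [hv'def]
    rw [if_pos ⟨c, hc, rfl⟩]
  · obtain ⟨c, hc, rfl⟩ := hφ
    simp only [Finset.mem_sdiff] at hc
    simp only [hv'def]
    rw [if_neg]
    · have hm : c ∈ S.comps \ Δ := Finset.mem_sdiff.mpr ⟨hc.1, fun h => hc.2 (h1 h)⟩
      exact hv _ (Or.inr ⟨c, hm, rfl⟩)
    · rintro ⟨C', hC', he⟩
      exact hc.2 (S.ab_inj he ▸ hC')

/-- In a weak model of failure, `C ∈ 𝔠` is an actual cause iff `C` belongs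
to some minimal diagnosis. -/
theorem actualCause_iff_mem_minimalDiagnosis
    (S : DiagSetting V α) (hW : S.WeakModel) (C : α) (hC : C ∈ S.comps) :
    S.ActualCause C ↔ ∃ Δ : Finset α, S.MinimalDiagnosis Δ ∧ C ∈ Δ := by
  constructor
  · rintro ⟨Γ, hCc, hΓsub, hincons, hcons⟩
    -- the family of diagnoses contained in `insert C Γ`
    set P : Finset α → Prop := fun Δ => S.Diagnosis Δ ∧ Δ ⊆ insert C Γ with hP
    have hΓc : Γ ⊆ S.comps := hΓsub.trans (Finset.erase_subset _ _)
    have hsub : insert C Γ ⊆ S.comps := Finset.insert_subset hCc hΓc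
    have hPfull : P (insert C Γ) := ⟨⟨hsub, hcons⟩, le_refl _⟩
    -- pick a member of minimal cardinality
    set s : Set ℕ := {n | ∃ Δ, P Δ ∧ Δ.card = n} with hs
    have hne : (insert C Γ).card ∈ s := ⟨_, hPfull, rfl⟩
    obtain ⟨Δ, hPΔ, hcard⟩ := Nat.sInf_mem (Set.nonempty_of_mem hne)
    -- every diagnosis contained in `insert C Γ` contains `C`
    have hCmem : ∀ Δ', P Δ' → C ∈ Δ' := by
      intro Δ' hΔ'
      by_contra hn
      have hΔ'Γ : Δ' ⊆ Γ := by
        intro x hx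
        rcases Finset.mem_insert.mp (hΔ'.2 hx) with rfl | h
        · exact absurd hx hn
        · exact h
      exact hincons (th_mono S hW hΔ'Γ hΓc hΔ'.1.2)
    refine ⟨Δ, ⟨hPΔ.1, ?_⟩, hCmem Δ hPΔ⟩
    intro Δ' hΔ' hd
    have hPΔ' : P Δ' := ⟨hd, hΔ'.1.trans hPΔ.2⟩
    have : sInf s ≤ Δ'.card := Nat.sInf_le ⟨Δ', hPΔ', rfl⟩
    have hlt : Δ'.card < Δ.card := Finset.card_lt_card hΔ'
    omega
  · rintro ⟨Δ, ⟨⟨hΔc, hΔcons⟩, hmin⟩, hCΔ⟩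
    refine ⟨Δ.erase C, hC, Finset.erase_subset_erase C hΔc, ?_, ?_⟩
    · intro hcons
      exact hmin (Δ.erase C) (Finset.erase_ssubset hCΔ)
        ⟨(Finset.erase_subset _ _).trans hΔc, hcons⟩
    · rwa [Finset.insert_erase hCΔ]
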